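/- Let A be a bialgebra over a field K which is conilpotent in the sense that for each a ∈ A there exists n with (id − η∘ε)^{⊗n} ∘ Δ^{(n)}(a) = 0. Then A is a Hopf algebra, with antipode given by S = Σ_{n≥0} (−1)^n m^{(n)} ∘ (id − η∘ε)^{⊗n} ∘ Δ^{(n)}. -/

import Mathlib

open TensorProduct

set_option linter.unusedSectionVars false

noncomputable section

variable (K : Type*) [Field K] [CharZero K]
variable (A : Type*) [Ring A] [Bialgebra K A]

/-- Convolution product of linear endomorphisms of a bialgebra:
`f ⋆ g = m ∘ (f ⊗ g) ∘ Δ`. -/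
def conv (f g : A →ₗ[K] A) : A →ₗ[K] A :=
  LinearMap.mul' K A ∘ₗ TensorProduct.map f g ∘ₗ (Coalgebra.comul : A →ₗ[K] A ⊗[K] A)

/-- `η ∘ ε`, the unit of the convolution algebra. -/
def unitCounit : A →ₗ[K] A :=
  Algebra.linearMap K A ∘ₗ (Coalgebra.counit : A →ₗ[K] K)

/-- Convolution powers of `J = id − η∘ε`; note
`J^{⋆n} = m^{(n)} ∘ (id − η∘ε)^{⊗n} ∘ Δ^{(n)}`. -/
def convPowJ : ℕ → (A →ₗ[K] A)
  | 0 => unitCounit K A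
  | n + 1 => conv K A (LinearMap.id - unitCounit K A) (convPowJ n)

/-- `conv` as a bilinear map. -/
def convBil : (A →ₗ[K] A) →ₗ[K] (A →ₗ[K] A) →ₗ[K] (A →ₗ[K] A) :=
  LinearMap.mk₂ K (conv K A)
    (fun f f' g => by
      simp only [conv, TensorProduct.map_add_left, LinearMap.add_comp, LinearMap.comp_add])
    (fun c f g => by
      simp only [conv, TensorProduct.map_smul_left, LinearMap.smul_comp, LinearMap.comp_smul])
    (fun f g g' => by
      simp only [conv, TensorProduct.map_add_right, LinearMap.add_comp, LinearMap.comp_add])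
    (fun c f g => by
      simp only [conv, TensorProduct.map_smul_right, LinearMap.smul_comp, LinearMap.comp_smul])

lemma convBil_apply (f g : A →ₗ[K] A) : convBil K A f g = conv K A f g := rfl

lemma conv_unit_left (f : A →ₗ[K] A) : conv K A (unitCounit K A) f = f := by
  ext a
  have aux : ∀ c : A ⊗[K] A,
      LinearMap.mul' K A (TensorProduct.map (unitCounit K A) f c) =
      f (TensorProduct.lid K A ((Coalgebra.counit (R := K) (A := A)).rTensor A c)) := by
    intro c
    induction c using TensorProduct.induction_on with
    | zero => simp
    | tmul x y =>
      simp only [TensorProduct.map_tmul, LinearMap.mul'_apply, unitCounit,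
        LinearMap.coe_comp, Function.comp_apply, Algebra.linearMap_apply,
        LinearMap.rTensor_tmul, TensorProduct.lid_tmul, map_smul]
      rw [Algebra.smul_def]
    | add c d hc hd => simp [hc, hd]
  show LinearMap.mul' K A (TensorProduct.map (unitCounit K A) f (Coalgebra.comul a)) = f a
  rw [aux, Coalgebra.rTensor_counit_comul]
  simp

lemma conv_unit_right (f : A →ₗ[K] A) : conv K A f (unitCounit K A) = f := by
  ext a
  have aux : ∀ c : A ⊗[K] A,
      LinearMap.mul' K A (TensorProduct.map f (unitCounit K A) c) =
      f (TensorProduct.rid K A ((Coalgebra.counit (R := K) (A := A)).lTensor A c)) := by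
    intro c
    induction c using TensorProduct.induction_on with
    | zero => simp
    | tmul x y =>
      simp only [TensorProduct.map_tmul, LinearMap.mul'_apply, unitCounit,
        LinearMap.coe_comp, Function.comp_apply, Algebra.linearMap_apply,
        LinearMap.lTensor_tmul, TensorProduct.rid_tmul, map_smul]
      rw [Algebra.smul_def, Algebra.commutes]
    | add c d hc hd => simp [hc, hd]
  show LinearMap.mul' K A (TensorProduct.map f (unitCounit K A) (Coalgebra.comul a)) = f a
  rw [aux, Coalgebra.lTensor_counit_comul]
  simp

set_option synthInstance.maxHeartbeats 400000 in
lemma conv_assoc (f g h : A →ₗ[K] A) :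
    conv K A (conv K A f g) h = conv K A f (conv K A g h) := by
  ext a
  have aux1 : ∀ c : A ⊗[K] A,
      TensorProduct.map (conv K A f g) h c =
      TensorProduct.map (LinearMap.mul' K A ∘ₗ TensorProduct.map f g) h
        ((Coalgebra.comul (R := K) (A := A)).rTensor A c) := by
    intro c
    induction c using TensorProduct.induction_on with
    | zero => simp
    | tmul x y => simp [conv]
    | add c d hc hd => simp [hc, hd]
  have aux2 : ∀ c : A ⊗[K] A,
      TensorProduct.map f (conv K A g h) c =
      TensorProduct.map f (LinearMap.mul' K A ∘ₗ TensorProduct.map g h)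
        ((Coalgebra.comul (R := K) (A := A)).lTensor A c) := by
    intro c
    induction c using TensorProduct.induction_on with
    | zero => simp
    | tmul x y => simp [conv]
    | add c d hc hd => simp [hc, hd]
  have key : ∀ z : (A ⊗[K] A) ⊗[K] A,
      LinearMap.mul' K A
        (TensorProduct.map (LinearMap.mul' K A ∘ₗ TensorProduct.map f g) h z) =
      LinearMap.mul' K A
        (TensorProduct.map f (LinearMap.mul' K A ∘ₗ TensorProduct.map g h)
          (TensorProduct.assoc K A A A z)) := by
    intro z
    induction z using TensorProduct.induction_on with
    | zero => simp
    | tmul p w =>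
      induction p using TensorProduct.induction_on with
      | zero => simp
      | tmul x y => simp [mul_assoc]
      | add p q hp hq => simp only [add_tmul, map_add, hp, hq]
    | add z w hz hw => simp [hz, hw]
  show LinearMap.mul' K A (TensorProduct.map (conv K A f g) h (Coalgebra.comul a)) =
      LinearMap.mul' K A (TensorProduct.map f (conv K A g h) (Coalgebra.comul a))
  rw [aux1, aux2, ← Coalgebra.coassoc_apply, key]

lemma convPowJ_succ_right (k : ℕ) :
    conv K A (convPowJ K A k) (LinearMap.id - unitCounit K A) = convPowJ K A (k + 1) := by
  induction k with
  | zero =>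
    show conv K A (unitCounit K A) _ = conv K A _ (convPowJ K A 0)
    rw [conv_unit_left]
    show _ = conv K A _ (unitCounit K A)
    rw [conv_unit_right]
  | succ k ih =>
    show conv K A (conv K A (LinearMap.id - unitCounit K A) (convPowJ K A k)) _ = _
    rw [conv_assoc, ih]
    rfl

lemma tele (n : ℕ) :
    (∑ k ∈ Finset.range n,
      ((-1 : K) ^ k) • (convPowJ K A (k + 1) + convPowJ K A k)) =
    unitCounit K A - ((-1 : K) ^ n) • convPowJ K A n := by
  induction n with
  | zero => simp [convPowJ]
  | succ n ih =>
    rw [Finset.sum_range_succ, ih, smul_add, pow_succ]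
    rw [mul_neg_one, show ∀ (r : K) (x : A →ₗ[K] A), -r • x = -(r • x) from fun r x => by ext; simp]
    abel

lemma convT_left (n : ℕ) :
    conv K A (∑ k ∈ Finset.range n, ((-1 : K) ^ k) • convPowJ K A k) LinearMap.id =
    unitCounit K A - ((-1 : K) ^ n) • convPowJ K A n := by
  have hid : (LinearMap.id : A →ₗ[K] A) =
      (LinearMap.id - unitCounit K A) + unitCounit K A := by abel
  rw [← convBil_apply, hid, map_add]
  simp only [map_sum, LinearMap.sum_apply, map_smul, LinearMap.smul_apply]
  have : ∀ k, convBil K A (convPowJ K A k) (LinearMap.id - unitCounit K A)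
      + convBil K A (convPowJ K A k) (unitCounit K A)
      = convPowJ K A (k + 1) + convPowJ K A k := by
    intro k
    rw [convBil_apply, convBil_apply, convPowJ_succ_right, conv_unit_right]
  calc (∑ k ∈ Finset.range n, ((-1:K)^k) •
          convBil K A (convPowJ K A k) (LinearMap.id - unitCounit K A))
        + (∑ k ∈ Finset.range n, ((-1:K)^k) •
          convBil K A (convPowJ K A k) (unitCounit K A))
      = ∑ k ∈ Finset.range n, ((-1:K)^k) • (convPowJ K A (k+1) + convPowJ K A k) := by
        rw [← Finset.sum_add_distrib]
        refine Finset.sum_congr rfl fun k _ => by rw [← smul_add, this k]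
    _ = _ := tele K A n

lemma convT_right (n : ℕ) :
    conv K A LinearMap.id (∑ k ∈ Finset.range n, ((-1 : K) ^ k) • convPowJ K A k) =
    unitCounit K A - ((-1 : K) ^ n) • convPowJ K A n := by
  have hid : (LinearMap.id : A →ₗ[K] A) =
      (LinearMap.id - unitCounit K A) + unitCounit K A := by abel
  rw [← convBil_apply, hid, map_add, LinearMap.add_apply, map_sum, map_sum]
  simp only [map_smul, LinearMap.sum_apply, LinearMap.smul_apply]
  have : ∀ k, convBil K A (LinearMap.id - unitCounit K A) (convPowJ K A k)
      + convBil K A (unitCounit K A) (convPowJ K A k)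
      = convPowJ K A (k + 1) + convPowJ K A k := by
    intro k
    rw [convBil_apply, convBil_apply, conv_unit_left]
    rfl
  calc (∑ k ∈ Finset.range n, ((-1:K)^k) •
          convBil K A (LinearMap.id - unitCounit K A) (convPowJ K A k))
        + (∑ k ∈ Finset.range n, ((-1:K)^k) •
          convBil K A (unitCounit K A) (convPowJ K A k))
      = ∑ k ∈ Finset.range n, ((-1:K)^k) • (convPowJ K A (k+1) + convPowJ K A k) := by
        rw [← Finset.sum_add_distrib]
        refine Finset.sum_congr rfl fun k _ => by rw [← smul_add, this k]
    _ = _ := tele K A n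

/- A conilpotent bialgebra is a Hopf algebra, with antipode
`S = Σ_{n≥0} (−1)^n m^{(n)} ∘ (id − η∘ε)^{⊗n} ∘ Δ^{(n)}`:
`S` satisfies the antipode axioms `m∘(S⊗id)∘Δ = η∘ε = m∘(id⊗S)∘Δ`. -/
theorem stmt5
    (hconil : ∀ a : A, ∃ N : ℕ, ∀ n ≥ N, convPowJ K A n a = 0)
    (S : A →ₗ[K] A)
    (hS : ∀ a : A, ∃ N : ℕ, ∀ n ≥ N,
      S a = ∑ k ∈ Finset.range n, ((-1 : K) ^ k) • convPowJ K A k a) :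
    conv K A S LinearMap.id = unitCounit K A ∧
    conv K A LinearMap.id S = unitCounit K A := by
  classical
  set T : ℕ → (A →ₗ[K] A) :=
    fun n => ∑ k ∈ Finset.range n, ((-1 : K) ^ k) • convPowJ K A k with hT
  have hST : ∀ x : A, ∃ N : ℕ, ∀ n ≥ N, (S - T n) x = 0 := by
    intro x
    obtain ⟨N, hN⟩ := hS x
    refine ⟨N, fun n hn => ?_⟩
    rw [LinearMap.sub_apply, sub_eq_zero, hN n hn, hT]
    simp [LinearMap.sum_apply]
  have vanish : ∀ c : A ⊗[K] A, ∃ M : ℕ, ∀ n ≥ M,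
      TensorProduct.map (S - T n) LinearMap.id c = 0 ∧
      TensorProduct.map LinearMap.id (S - T n) c = 0 := by
    intro c
    induction c using TensorProduct.induction_on with
    | zero => exact ⟨0, fun n _ => by simp⟩
    | tmul x y =>
      obtain ⟨N₁, h₁⟩ := hST x
      obtain ⟨N₂, h₂⟩ := hST y
      refine ⟨max N₁ N₂, fun n hn => ?_⟩
      constructor
      · simp [h₁ n (le_of_max_le_left hn)]
      · simp [h₂ n (le_of_max_le_right hn)]
    | add c d hc hd =>
      obtain ⟨M₁, h₁⟩ := hc
      obtain ⟨M₂, h₂⟩ := hd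
      refine ⟨max M₁ M₂, fun n hn => ?_⟩
      have e₁ := h₁ n (le_of_max_le_left hn)
      have e₂ := h₂ n (le_of_max_le_right hn)
      constructor
      · rw [map_add, e₁.1, e₂.1, add_zero]
      · rw [map_add, e₁.2, e₂.2, add_zero]
  constructor
  · ext a
    obtain ⟨N₀, h₀⟩ := hconil a
    obtain ⟨M, hM⟩ := vanish (Coalgebra.comul a)
    set n := max N₀ M with hn
    have hsplit : TensorProduct.map S LinearMap.id
        ((Coalgebra.comul : A →ₗ[K] A ⊗[K] A) a) =
        TensorProduct.map (T n) LinearMap.id ((Coalgebra.comul : A →ₗ[K] A ⊗[K] A) a) := by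
      have hdec : TensorProduct.map S (LinearMap.id : A →ₗ[K] A) =
          TensorProduct.map (T n) LinearMap.id + TensorProduct.map (S - T n) LinearMap.id := by
        rw [← TensorProduct.map_add_left, add_sub_cancel]
      rw [hdec, LinearMap.add_apply, (hM n (le_max_right _ _)).1, add_zero]
    have : conv K A S LinearMap.id a = conv K A (T n) LinearMap.id a := by
      show LinearMap.mul' K A (TensorProduct.map S LinearMap.id (Coalgebra.comul a)) =
          LinearMap.mul' K A (TensorProduct.map (T n) LinearMap.id (Coalgebra.comul a))
      rw [hsplit]
    rw [this, hT, convT_left, LinearMap.sub_apply, LinearMap.smul_apply,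
      h₀ n (le_max_left _ _), smul_zero, sub_zero]
  · ext a
    obtain ⟨N₀, h₀⟩ := hconil a
    obtain ⟨M, hM⟩ := vanish (Coalgebra.comul a)
    set n := max N₀ M with hn
    have hsplit : TensorProduct.map LinearMap.id S
        ((Coalgebra.comul : A →ₗ[K] A ⊗[K] A) a) =
        TensorProduct.map LinearMap.id (T n) ((Coalgebra.comul : A →ₗ[K] A ⊗[K] A) a) := by
      have hdec : TensorProduct.map (LinearMap.id : A →ₗ[K] A) S =
          TensorProduct.map LinearMap.id (T n) + TensorProduct.map LinearMap.id (S - T n) := by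
        rw [← TensorProduct.map_add_right, add_sub_cancel]
      rw [hdec, LinearMap.add_apply, (hM n (le_max_right _ _)).2, add_zero]
    have : conv K A LinearMap.id S a = conv K A LinearMap.id (T n) a := by
      show LinearMap.mul' K A (TensorProduct.map LinearMap.id S (Coalgebra.comul a)) =
          LinearMap.mul' K A (TensorProduct.map LinearMap.id (T n) (Coalgebra.comul a))
      rw [hsplit]
    rw [this, hT, convT_right, LinearMap.sub_apply, LinearMap.smul_apply,
      h₀ n (le_max_left _ _), smul_zero, sub_zero]

end
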